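/- The set of real 5×5 matrices of the form [[a+e₁, c, p, q, 0], [b, −a+e₁, 0, p, q], [0, 0, 2a+e₂, 2c, 0], [0, 0, b, e₂, c], [0, 0, 0, 2b, −2a+e₂]] with a, b, c, e₁, e₂, p, q ranging over ℝ is an ℝ-linear subspace of the 5×5 matrices of dimension exactly 7, and it is closed under the matrix commutator [A,B] = AB − BA; hence it is a 7-dimensional Lie subalgebra of gl(5,ℝ). -/
import Mathlib


open scoped BigOperators

/-- The set of real 5×5 matrices of the form
`[[a+e₁, c, p, q, 0], [b, −a+e₁, 0, p, q], [0, 0, 2a+e₂, 2c, 0], [0, 0, b, e₂, c],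
[0, 0, 0, 2b, −2a+e₂]]`, i.e. the symmetry algebra `𝔞^{II}_{2,3}` of the rational normal
scroll `S_{2,3}`. -/
noncomputable def scrollSet : Set (Matrix (Fin 5) (Fin 5) ℝ) :=
  {A | ∃ a b c e₁ e₂ p q : ℝ,
    A = !![a + e₁, c, p, q, 0;
           b, -a + e₁, 0, p, q;
           0, 0, 2*a + e₂, 2*c, 0;
           0, 0, b, e₂, c;
           0, 0, 0, 2*b, -2*a + e₂]}

/-- Parametrization of `scrollSet` as a linear map from `ℝ⁷`. -/
noncomputable def scrollMap : (Fin 7 → ℝ) →ₗ[ℝ] Matrix (Fin 5) (Fin 5) ℝ where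
  toFun v := !![v 0 + v 3, v 2, v 5, v 6, 0;
                v 1, -v 0 + v 3, 0, v 5, v 6;
                0, 0, 2*v 0 + v 4, 2*v 2, 0;
                0, 0, v 1, v 4, v 2;
                0, 0, 0, 2*v 1, -2*v 0 + v 4]
  map_add' x y := by
    ext i j
    simp only [Matrix.add_apply, Pi.add_apply]
    fin_cases i <;> fin_cases j <;>
      simp [Matrix.vecHead, Matrix.vecTail] <;> ring
  map_smul' r x := by
    ext i j
    simp only [Matrix.smul_apply, Pi.smul_apply, smul_eq_mul, RingHom.id_apply]
    fin_cases i <;> fin_cases j <;>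
      simp [Matrix.vecHead, Matrix.vecTail] <;> ring

lemma scrollMap_apply (v : Fin 7 → ℝ) :
    scrollMap v = !![v 0 + v 3, v 2, v 5, v 6, 0;
                v 1, -v 0 + v 3, 0, v 5, v 6;
                0, 0, 2*v 0 + v 4, 2*v 2, 0;
                0, 0, v 1, v 4, v 2;
                0, 0, 0, 2*v 1, -2*v 0 + v 4] := rfl

lemma scrollMap_injective : Function.Injective scrollMap := by
  rw [injective_iff_map_eq_zero]
  intro v hv
  have h : ∀ i j : Fin 5, scrollMap v i j = 0 := fun i j => by rw [hv]; rfl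
  have h00 := h 0 0; have h11 := h 1 1; have h01 := h 0 1
  have h10 := h 1 0; have h33 := h 3 3; have h02 := h 0 2; have h03 := h 0 3
  simp [scrollMap_apply] at h00 h11 h01 h10 h33 h02 h03
  funext i
  fin_cases i <;> simp <;> linarith

set_option maxHeartbeats 1000000 in
/-- The key commutator identity for matrices of the scroll form. -/
lemma scroll_comm (a b c e₁ e₂ p q A B C E₁ E₂ P Q : ℝ) :
    !![a + e₁, c, p, q, 0; b, -a + e₁, 0, p, q; 0, 0, 2*a + e₂, 2*c, 0;
       0, 0, b, e₂, c; 0, 0, 0, 2*b, -2*a + e₂] *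
    !![A + E₁, C, P, Q, 0; B, -A + E₁, 0, P, Q; 0, 0, 2*A + E₂, 2*C, 0;
       0, 0, B, E₂, C; 0, 0, 0, 2*B, -2*A + E₂] -
    !![A + E₁, C, P, Q, 0; B, -A + E₁, 0, P, Q; 0, 0, 2*A + E₂, 2*C, 0;
       0, 0, B, E₂, C; 0, 0, 0, 2*B, -2*A + E₂] *
    !![a + e₁, c, p, q, 0; b, -a + e₁, 0, p, q; 0, 0, 2*a + e₂, 2*c, 0;
       0, 0, b, e₂, c; 0, 0, 0, 2*b, -2*a + e₂] =
    !![(c*B - b*C) + 0, (2*a*C - 2*c*A), (q*B + p*E₂ - p*E₁ + p*A - e₂*P + e₁*P - b*Q - a*P),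
       (q*E₂ - q*E₁ - q*A + p*C - e₂*Q + e₁*Q - c*P + a*Q), 0;
       (2*b*A - 2*a*B), -(c*B - b*C) + 0, 0, (q*B + p*E₂ - p*E₁ + p*A - e₂*P + e₁*P - b*Q - a*P),
       (q*E₂ - q*E₁ - q*A + p*C - e₂*Q + e₁*Q - c*P + a*Q);
       0, 0, 2*(c*B - b*C) + 0, 2*(2*a*C - 2*c*A), 0;
       0, 0, (2*b*A - 2*a*B), 0, (2*a*C - 2*c*A);
       0, 0, 0, 2*(2*b*A - 2*a*B), -2*(c*B - b*C) + 0] := by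
  ext i j
  simp only [Matrix.sub_apply, Matrix.mul_apply, Fin.sum_univ_five]
  fin_cases i <;> fin_cases j <;>
    simp [Matrix.vecHead, Matrix.vecTail] <;> ring

/-- `scrollSet` is an ℝ-linear subspace of the 5×5 matrices of dimension
exactly 7, closed under the matrix commutator; hence it is a 7-dimensional Lie subalgebra
of `gl(5,ℝ)`. -/
theorem stmt_17 :
    ∃ S : Submodule ℝ (Matrix (Fin 5) (Fin 5) ℝ),
      (S : Set (Matrix (Fin 5) (Fin 5) ℝ)) = scrollSet ∧
      Module.rank ℝ ↥S = (7 : Cardinal) ∧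
      (∀ A ∈ S, ∀ B ∈ S, A * B - B * A ∈ S) := by
  have hset : ((LinearMap.range scrollMap : Submodule ℝ (Matrix (Fin 5) (Fin 5) ℝ)) :
      Set (Matrix (Fin 5) (Fin 5) ℝ)) = scrollSet := by
    ext M
    constructor
    · rintro ⟨v, rfl⟩
      exact ⟨v 0, v 1, v 2, v 3, v 4, v 5, v 6, by rw [scrollMap_apply]⟩
    · rintro ⟨a, b, c, e₁, e₂, p, q, rfl⟩
      refine ⟨![a, b, c, e₁, e₂, p, q], ?_⟩
      rw [scrollMap_apply]
      rfl
  refine ⟨LinearMap.range scrollMap, hset, ?_, ?_⟩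
  · rw [← (LinearEquiv.ofInjective scrollMap scrollMap_injective).rank_eq]
    simp [rank_fun']
  · intro M hM N hN
    have hM' : M ∈ scrollSet := hset ▸ hM
    have hN' : N ∈ scrollSet := hset ▸ hN
    obtain ⟨a, b, c, e₁, e₂, p, q, rfl⟩ := hM'
    obtain ⟨A, B, C, E₁, E₂, P, Q, rfl⟩ := hN'
    refine (Set.ext_iff.mp hset _).mpr ?_
    rw [scroll_comm]
    exact ⟨c*B - b*C, 2*b*A - 2*a*B, 2*a*C - 2*c*A, 0, 0,
      q*B + p*E₂ - p*E₁ + p*A - e₂*P + e₁*P - b*Q - a*P,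
      q*E₂ - q*E₁ - q*A + p*C - e₂*Q + e₁*Q - c*P + a*Q, rfl⟩
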